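/- arXiv:1712.08096 — 5 statements merged into one kernel-verified Lean document; each statement's English description precedes it below -/
import Mathlib

section
/- Fix $c\in\mathbb{R}$. A full solution $u:\mathbb{R}\to\mathbb{R}^2$ of $\dot u=f^{-}_c(u)$ satisfies $u(t)\to(0,-c)$ as $t\to-\infty$ (equivalently, $u$ is bounded on $(-\infty,0]$) if and only if there is $h\in\mathbb{R}$ such that $u(t)=(he^t,\,h^2e^{2t}-c)$ for all $t\in\mathbb{R}$. Consequently, the global unstable set of the equilibrium $(0,-c)$, i.e. the set of values $u(0)$ over all full solutions converging to $(0,-c)$ at $-\infty$, equals the parabola $\{(h,h^2-c):h\in\mathbb{R}\}$. -/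
/-- `f⁻_c(x₁,x₂) = (x₁, -x₂ + 3x₁² - c)` -/
def fminus (c : ℝ) : ℝ × ℝ → ℝ × ℝ := fun x => (x.1, -x.2 + 3 * x.1 ^ 2 - c)

open Real Filter Set Bornology in
private lemma solform (c : ℝ) (u : ℝ → ℝ × ℝ) (hu : ∀ t, HasDerivAt u (fminus c (u t)) t) :
    ∀ t, u t = ((u 0).1 * exp t,
      (u 0).1 ^ 2 * exp (2 * t) - c + ((u 0).2 - (u 0).1 ^ 2 + c) * exp (-t)) := by
  have ha : ∀ t, HasDerivAt (fun s => (u s).1) ((u t).1) t := fun t => (hu t).fst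
  have hb : ∀ t, HasDerivAt (fun s => (u s).2) (-(u t).2 + 3 * (u t).1 ^ 2 - c) t :=
    fun t => (hu t).snd
  have hexpne : ∀ t : ℝ, exp t ≠ 0 := fun t => (exp_pos t).ne'
  -- first coordinate
  have hg : ∀ t, HasDerivAt (fun s => (u s).1 * exp (-s)) 0 t := by
    intro t
    have hne : HasDerivAt (fun s : ℝ => exp (-s)) (exp (-t) * (-1)) t :=
      (Real.hasDerivAt_exp (-t)).comp t (hasDerivAt_neg t)
    have : HasDerivAt (fun s => (u s).1 * exp (-s)) ((u t).1 * exp (-t) + (u t).1 * (exp (-t) * (-1))) t := (ha t).mul hne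
    convert this using 1; ring
  have hgc : ∀ t, (u t).1 * exp (-t) = (u 0).1 := by
    intro t
    have := is_const_of_deriv_eq_zero (f := fun s => (u s).1 * exp (-s))
      (fun s => (hg s).differentiableAt) (fun s => (hg s).deriv) t 0
    simpa using this
  have ha1 : ∀ t, (u t).1 = (u 0).1 * exp t := by
    intro t
    have := hgc t
    rw [exp_neg] at this
    field_simp at this
    linarith [this]
  -- second coordinate
  have e2 : ∀ t : ℝ, exp (2 * t) = exp t * exp t := by
    intro t; rw [two_mul, exp_add]
  have hG : ∀ t, HasDerivAt (fun s => ((u s).2 - (u 0).1 ^ 2 * exp (2 * s) + c) * exp s) 0 t := by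
    intro t
    have h2 : HasDerivAt (fun s : ℝ => exp (2 * s)) (exp (2 * t) * 2) t := by
      have : HasDerivAt (fun s : ℝ => exp (2 * s)) (exp (2 * t) * (2 * 1)) t := (Real.hasDerivAt_exp (2 * t)).comp t ((hasDerivAt_id t).const_mul (2:ℝ))
      simpa using this
    have hin : HasDerivAt (fun s => (u s).2 - (u 0).1 ^ 2 * exp (2 * s) + c)
        ((-(u t).2 + 3 * (u t).1 ^ 2 - c) - (u 0).1 ^ 2 * (exp (2 * t) * 2)) t :=
      ((hb t).sub (h2.const_mul _)).add_const c
    have : HasDerivAt (fun s => ((u s).2 - (u 0).1 ^ 2 * exp (2 * s) + c) * exp s) (((-(u t).2 + 3 * (u t).1 ^ 2 - c) - (u 0).1 ^ 2 * (exp (2 * t) * 2)) * exp t + ((u t).2 - (u 0).1 ^ 2 * exp (2 * t) + c) * exp t) t := hin.mul (Real.hasDerivAt_exp t)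
    convert this using 1
    rw [ha1 t, e2 t]; ring
  have hGc : ∀ t, ((u t).2 - (u 0).1 ^ 2 * exp (2 * t) + c) * exp t
      = (u 0).2 - (u 0).1 ^ 2 + c := by
    intro t
    have := is_const_of_deriv_eq_zero (f := fun s => ((u s).2 - (u 0).1 ^ 2 * exp (2 * s) + c) * exp s)
      (fun s => (hG s).differentiableAt) (fun s => (hG s).deriv) t 0
    simpa using this
  intro t
  have h2 : (u t).2 = (u 0).1 ^ 2 * exp (2 * t) - c + ((u 0).2 - (u 0).1 ^ 2 + c) * exp (-t) := by
    have := hGc t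
    rw [exp_neg]
    field_simp
    linarith [this]
  exact Prod.ext (ha1 t) h2

open Real Filter Set Bornology

lemma exp2_tendsto : Tendsto (fun t : ℝ => exp (2 * t)) atBot (nhds 0) := by
  have := (Real.tendsto_exp_atBot.mul Real.tendsto_exp_atBot)
  simp only [mul_zero] at this
  refine this.congr fun t => ?_
  rw [two_mul, exp_add]

-- the explicit solution satisfies the ODE
lemma explicit_deriv (c h : ℝ) (t : ℝ) :
    HasDerivAt (fun t => (h * exp t, h ^ 2 * exp (2 * t) - c))
      (fminus c (h * exp t, h ^ 2 * exp (2 * t) - c)) t := by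
  have d1 : HasDerivAt (fun t : ℝ => h * exp t) (h * exp t) t :=
    (Real.hasDerivAt_exp t).const_mul h
  have h2 : HasDerivAt (fun s : ℝ => exp (2 * s)) (exp (2 * t) * 2) t := by
    have : HasDerivAt (fun s : ℝ => exp (2 * s)) (exp (2 * t) * (2 * 1)) t := (Real.hasDerivAt_exp (2 * t)).comp t ((hasDerivAt_id t).const_mul (2:ℝ))
    simpa using this
  have d2 : HasDerivAt (fun t : ℝ => h ^ 2 * exp (2 * t) - c) (h ^ 2 * (exp (2 * t) * 2)) t :=
    (h2.const_mul _).sub_const c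
  have := d1.prodMk d2
  convert this using 2
  · simp only [fminus]
  simp only [fminus]
  rw [two_mul, exp_add]; ring

lemma explicit_tendsto (c h : ℝ) :
    Tendsto (fun t : ℝ => ((h * exp t, h ^ 2 * exp (2 * t) - c) : ℝ × ℝ))
      atBot (nhds ((0:ℝ), -c)) := by
  have t1 : Tendsto (fun t : ℝ => h * exp t) atBot (nhds 0) := by
    have := Real.tendsto_exp_atBot.const_mul h
    simpa using this
  have t2 : Tendsto (fun t : ℝ => h ^ 2 * exp (2 * t) - c) atBot (nhds (-c)) := by
    have := (exp2_tendsto.const_mul (h ^ 2)).sub_const c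
    simpa using this
  exact t1.prodMk_nhds t2

lemma explicit_bounded (c h : ℝ) :
    IsBounded ((fun t : ℝ => ((h * exp t, h ^ 2 * exp (2 * t) - c) : ℝ × ℝ)) '' Set.Iic (0:ℝ)) := by
  rw [isBounded_iff_forall_norm_le]
  refine ⟨|h| + (h ^ 2 + |c|), ?_⟩
  rintro x ⟨t, ht', rfl⟩
  have ht : t ≤ 0 := ht'
  have het : exp t ≤ 1 := exp_le_one_iff.mpr ht
  have he2 : exp (2 * t) ≤ 1 := exp_le_one_iff.mpr (by linarith [ht] : 2 * t ≤ 0)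
  have hp1 : |h * exp t| ≤ |h| := by
    rw [abs_mul, abs_of_pos (exp_pos t)]
    nlinarith [abs_nonneg h, exp_pos t]
  have hp2 : |h ^ 2 * exp (2 * t) - c| ≤ h ^ 2 + |c| := by
    have := abs_sub (h ^ 2 * exp (2 * t)) c
    have h1 : |h ^ 2 * exp (2 * t)| ≤ h ^ 2 := by
      rw [abs_mul, abs_of_nonneg (sq_nonneg h), abs_of_pos (exp_pos _)]
      nlinarith [sq_nonneg h, exp_pos (2*t)]
    calc |h ^ 2 * exp (2 * t) - c| ≤ |h ^ 2 * exp (2 * t)| + |c| := abs_sub _ _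
      _ ≤ h ^ 2 + |c| := by linarith
  have : ‖((h * exp t, h ^ 2 * exp (2 * t) - c) : ℝ × ℝ)‖
      = max |h * exp t| |h ^ 2 * exp (2 * t) - c| := rfl
  rw [this]
  have hnn : (0:ℝ) ≤ h ^ 2 + |c| := by positivity
  exact max_le (by linarith) (by linarith [abs_nonneg h])

section main

variable {c : ℝ} {u : ℝ → ℝ × ℝ}

-- F is the constant K
lemma Fconst (hu : ∀ t, HasDerivAt u (fminus c (u t)) t) (t : ℝ) :
    ((u t).2 - (u 0).1 ^ 2 * exp (2 * t) + c) * exp t = (u 0).2 - (u 0).1 ^ 2 + c := by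
  have h := solform c u hu t
  have h2 : (u t).2 = (u 0).1 ^ 2 * exp (2 * t) - c + ((u 0).2 - (u 0).1 ^ 2 + c) * exp (-t) :=
    congrArg Prod.snd h
  rw [h2, exp_neg]
  field_simp
  ring

lemma Kzero_of_tendsto (hu : ∀ t, HasDerivAt u (fminus c (u t)) t) (htend : Tendsto u atBot (nhds ((0:ℝ), -c))) :
    (u 0).2 - (u 0).1 ^ 2 + c = 0 := by
  have h2 : Tendsto (fun t => (u t).2) atBot (nhds (-c)) :=
    (Continuous.tendsto continuous_snd ((0:ℝ), -c)).comp htend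
  have hF : Tendsto (fun t => ((u t).2 - (u 0).1 ^ 2 * exp (2 * t) + c) * exp t)
      atBot (nhds 0) := by
    have := (((h2.sub (exp2_tendsto.const_mul ((u 0).1 ^ 2))).add_const c).mul
      Real.tendsto_exp_atBot)
    simpa using this
  have hK : Tendsto (fun t => ((u t).2 - (u 0).1 ^ 2 * exp (2 * t) + c) * exp t)
      atBot (nhds ((u 0).2 - (u 0).1 ^ 2 + c)) := by
    have : (fun t => ((u t).2 - (u 0).1 ^ 2 * exp (2 * t) + c) * exp t)
        = fun _ => (u 0).2 - (u 0).1 ^ 2 + c := funext (Fconst hu)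
    rw [this]; exact tendsto_const_nhds
  exact (tendsto_nhds_unique hK hF)

lemma Kzero_of_bounded (hu : ∀ t, HasDerivAt u (fminus c (u t)) t) (hbd : IsBounded (u '' Set.Iic (0:ℝ))) :
    (u 0).2 - (u 0).1 ^ 2 + c = 0 := by
  obtain ⟨C, hC⟩ := isBounded_iff_forall_norm_le.mp hbd
  have hF : Tendsto (fun t => ((u t).2 - (u 0).1 ^ 2 * exp (2 * t) + c) * exp t)
      atBot (nhds 0) := by
    have hg : Tendsto (fun t : ℝ => (C + (u 0).1 ^ 2 + |c|) * exp t) atBot (nhds 0) := by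
      have := Real.tendsto_exp_atBot.const_mul (C + (u 0).1 ^ 2 + |c|)
      simpa using this
    refine squeeze_zero_norm' ?_ hg
    · filter_upwards [eventually_le_atBot (0:ℝ)] with t ht
      have hmem : u t ∈ u '' Set.Iic (0:ℝ) := ⟨t, ht, rfl⟩
      have hb2 : |(u t).2| ≤ C := le_trans (norm_snd_le (u t)) (hC _ hmem)
      have he2 : exp (2 * t) ≤ 1 := exp_le_one_iff.mpr (by linarith)
      have he2p := exp_pos (2 * t)
      have hep := exp_pos t
      have : |((u t).2 - (u 0).1 ^ 2 * exp (2 * t) + c) * exp t|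
          = |(u t).2 - (u 0).1 ^ 2 * exp (2 * t) + c| * exp t := by
        rw [abs_mul, abs_of_pos hep]
      rw [Real.norm_eq_abs, this]
      have habs : |(u t).2 - (u 0).1 ^ 2 * exp (2 * t) + c| ≤ C + (u 0).1 ^ 2 + |c| := by
        have h1 : |(u 0).1 ^ 2 * exp (2 * t)| ≤ (u 0).1 ^ 2 := by
          rw [abs_mul, abs_of_nonneg (sq_nonneg _), abs_of_pos he2p]
          nlinarith [sq_nonneg (u 0).1]
        calc |(u t).2 - (u 0).1 ^ 2 * exp (2 * t) + c|
            ≤ |(u t).2| + |(u 0).1 ^ 2 * exp (2 * t)| + |c| := by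
              have := abs_add_le ((u t).2 - (u 0).1 ^ 2 * exp (2 * t)) c
              have := abs_sub ((u t).2) ((u 0).1 ^ 2 * exp (2 * t))
              linarith [abs_add_le ((u t).2 - (u 0).1 ^ 2 * exp (2 * t)) c,
                abs_sub ((u t).2) ((u 0).1 ^ 2 * exp (2 * t))]
          _ ≤ C + (u 0).1 ^ 2 + |c| := by linarith
      exact mul_le_mul_of_nonneg_right habs hep.le
  have hK : Tendsto (fun t => ((u t).2 - (u 0).1 ^ 2 * exp (2 * t) + c) * exp t)
      atBot (nhds ((u 0).2 - (u 0).1 ^ 2 + c)) := by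
    have : (fun t => ((u t).2 - (u 0).1 ^ 2 * exp (2 * t) + c) * exp t)
        = fun _ => (u 0).2 - (u 0).1 ^ 2 + c := funext (Fconst hu)
    rw [this]; exact tendsto_const_nhds
  exact (tendsto_nhds_unique hK hF)

lemma formula_of_Kzero (hu : ∀ t, HasDerivAt u (fminus c (u t)) t) (hK : (u 0).2 - (u 0).1 ^ 2 + c = 0) :
    ∃ h : ℝ, ∀ t : ℝ, u t = (h * exp t, h ^ 2 * exp (2 * t) - c) := by
  refine ⟨(u 0).1, fun t => ?_⟩
  have := solform c u hu t
  rw [this, hK]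
  simp

end main

/-- A full solution `u` of `u̇ = f⁻_c(u)` converges to `(0,-c)`
as `t → -∞` (equivalently, is bounded on `(-∞,0]`) iff
`u(t) = (h eᵗ, h² e^{2t} - c)` for some `h ∈ ℝ`; consequently the global
unstable set of `(0,-c)` is the parabola `{(h, h² - c) : h ∈ ℝ}`. -/
theorem stmt5 (c : ℝ) :
    (∀ u : ℝ → ℝ × ℝ, (∀ t : ℝ, HasDerivAt u (fminus c (u t)) t) →
      ((Filter.Tendsto u Filter.atBot (nhds ((0:ℝ), -c)) ↔
          ∃ h : ℝ, ∀ t : ℝ,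
            u t = (h * Real.exp t, h ^ 2 * Real.exp (2 * t) - c)) ∧
       (Bornology.IsBounded (u '' Set.Iic (0:ℝ)) ↔
          ∃ h : ℝ, ∀ t : ℝ,
            u t = (h * Real.exp t, h ^ 2 * Real.exp (2 * t) - c)))) ∧
    ({x : ℝ × ℝ | ∃ u : ℝ → ℝ × ℝ,
        (∀ t : ℝ, HasDerivAt u (fminus c (u t)) t) ∧
        Filter.Tendsto u Filter.atBot (nhds ((0:ℝ), -c)) ∧ u 0 = x}
      = {p : ℝ × ℝ | ∃ h : ℝ, p = (h, h ^ 2 - c)}) := by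
  have part1 : ∀ u : ℝ → ℝ × ℝ, (∀ t : ℝ, HasDerivAt u (fminus c (u t)) t) →
      ((Filter.Tendsto u Filter.atBot (nhds ((0:ℝ), -c)) ↔
          ∃ h : ℝ, ∀ t : ℝ,
            u t = (h * Real.exp t, h ^ 2 * Real.exp (2 * t) - c)) ∧
       (Bornology.IsBounded (u '' Set.Iic (0:ℝ)) ↔
          ∃ h : ℝ, ∀ t : ℝ,
            u t = (h * Real.exp t, h ^ 2 * Real.exp (2 * t) - c))) := by
    intro u hu
    constructor
    · constructor
      · intro htend
        exact formula_of_Kzero hu (Kzero_of_tendsto hu htend)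
      · rintro ⟨h, hf⟩
        have : u = fun t => ((h * exp t, h ^ 2 * exp (2 * t) - c) : ℝ × ℝ) := funext hf
        rw [this]
        exact explicit_tendsto c h
    · constructor
      · intro hbd
        exact formula_of_Kzero hu (Kzero_of_bounded hu hbd)
      · rintro ⟨h, hf⟩
        have : u = fun t => ((h * exp t, h ^ 2 * exp (2 * t) - c) : ℝ × ℝ) := funext hf
        rw [this]
        exact explicit_bounded c h
  refine ⟨part1, ?_⟩
  ext x
  simp only [Set.mem_setOf_eq]
  constructor
  · rintro ⟨u, hu, htend, h0⟩
    obtain ⟨h, hf⟩ := ((part1 u hu).1).mp htend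
    refine ⟨h, ?_⟩
    rw [← h0, hf 0]
    simp
  · rintro ⟨h, rfl⟩
    refine ⟨fun t => ((h * exp t, h ^ 2 * exp (2 * t) - c) : ℝ × ℝ),
      fun t => explicit_deriv c h t, explicit_tendsto c h, ?_⟩
    simp
end

section
/- Fix $c\in\mathbb{R}$ and $\varepsilon>0$. Every bounded full solution $u:\mathbb{R}\to\mathbb{R}^2$ of the nonautonomous equation $\dot x=f_c(t,x)$ satisfies $u(t)\to(0,-c)$ as $t\to-\infty$, $u(t)\to(0,0)$ as $t\to+\infty$, and its value at time zero lies in the intersection of the parabola $\{(h,h^2-c):h\in\mathbb{R}\}$ with the horizontal axis $\mathbb{R}\times\{0\}$, i.e. $u_2(0)=0$ and $u_1(0)^2=c$. -/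
open Real Set Filter

private lemma constEq {f f' : ℝ → ℝ} (hf : ∀ t, HasDerivAt f (f' t) t)
    {a b : ℝ} (hab : a ≤ b) (h0 : ∀ t ∈ Set.Icc a b, f' t = 0) : f b = f a :=
  constant_of_has_deriv_right_zero
    (fun t _ => (hf t).continuousAt.continuousWithinAt)
    (fun t ht => by
      have h := (hf t).hasDerivWithinAt (s := Set.Ici t)
      rwa [h0 t ⟨ht.1, ht.2.le⟩] at h)
    b ⟨hab, le_rfl⟩

private lemma coefZero {a K : ℝ} (h : ∀ t : ℝ, 1 ≤ t → |a| * Real.exp t ≤ K) : a = 0 := by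
  by_contra h0
  have ha : 0 < |a| := abs_pos.2 h0
  set t := max 1 (K / |a|) with ht
  have h1 := h t (le_max_left _ _)
  have h2 : K / |a| < Real.exp t := by
    have := Real.add_one_le_exp t
    have h3 : (1:ℝ) ≤ t := le_max_left _ _
    have h4 : K / |a| ≤ t := le_max_right _ _
    linarith
  have h5 : K < |a| * Real.exp t := by
    rw [div_lt_iff₀ ha] at h2
    nlinarith
  linarith



/-- `f⁺_ε(x₁,x₂) = (-x₁ + εx₂, x₂)` -/
def fplus (ε : ℝ) : ℝ × ℝ → ℝ × ℝ := fun x => (-x.1 + ε * x.2, x.2)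

/-- `f_c(t,x) = φ'(-t) f⁻_c(x) + φ'(t) f⁺_ε(x)`, where `dφ = φ'`. -/
def fc (c ε : ℝ) (dφ : ℝ → ℝ) (t : ℝ) (x : ℝ × ℝ) : ℝ × ℝ :=
  dφ (-t) • fminus c x + dφ t • fplus ε x

/-- Every bounded full solution `u` of `ẋ = f_c(t,x)` satisfies
`u(t) → (0,-c)` as `t → -∞`, `u(t) → (0,0)` as `t → +∞`, and `u(0)` lies on
the intersection of the parabola `{(h,h²-c)}` with the horizontal axis:
`u₂(0) = 0` and `u₁(0)² = c`. -/
theorem stmt9 (c ε : ℝ) (hε : 0 < ε) (φ dφ : ℝ → ℝ)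
    (hφ : ∀ t : ℝ, HasDerivAt φ (dφ t) t) (hdc : Continuous dφ)
    (hφ0 : ∀ t ≤ (0:ℝ), φ t = 0) (hφ1 : ∀ t ≥ (1:ℝ), φ t = t)
    (hdpos : ∀ t : ℝ, 0 ≤ dφ t)
    (u : ℝ → ℝ × ℝ)
    (hu : ∀ t : ℝ, HasDerivAt u (fc c ε dφ t (u t)) t)
    (hb : Bornology.IsBounded (Set.range u)) :
    Filter.Tendsto u Filter.atBot (nhds ((0:ℝ), -c)) ∧
    Filter.Tendsto u Filter.atTop (nhds ((0:ℝ), (0:ℝ))) ∧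
    (u 0).2 = 0 ∧ (u 0).1 ^ 2 = c := by
  set u1 : ℝ → ℝ := fun s => (u s).1 with hu1def
  set u2 : ℝ → ℝ := fun s => (u s).2 with hu2def
  have hu1 : ∀ t, HasDerivAt u1 (dφ (-t) * u1 t + dφ t * (-u1 t + ε * u2 t)) t := by
    intro t
    have h := ((hu t).hasFDerivAt.fst).hasDerivAt
    simpa [fc, fminus, fplus, smul_eq_mul] using h
  have hu2 : ∀ t, HasDerivAt u2 (dφ (-t) * (-u2 t + 3 * u1 t ^ 2 - c) + dφ t * u2 t) t := by
    intro t
    have h := ((hu t).hasFDerivAt.snd).hasDerivAt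
    simpa [fc, fminus, fplus, smul_eq_mul] using h
  have hd0 : ∀ t ≤ (0:ℝ), dφ t = 0 := by
    have h1 : Set.EqOn dφ (fun _ => 0) (Set.Iio 0) := by
      intro t ht
      have hev : φ =ᶠ[nhds t] fun _ => 0 := by
        filter_upwards [Iio_mem_nhds ht] with s hs using hφ0 s hs.le
      have h2 : HasDerivAt φ 0 t :=
        (hasDerivAt_const t (0:ℝ)).congr_of_eventuallyEq hev
      exact (hφ t).unique h2
    have h2 := h1.closure hdc continuous_const
    rw [closure_Iio] at h2
    intro t ht
    exact h2 ht
  have hφz : φ 0 = 0 := hφ0 0 le_rfl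
  -- bound
  obtain ⟨M, hM⟩ := hb.exists_norm_le
  have hM1 : ∀ t, |u1 t| ≤ M := fun t =>
    (norm_fst_le (u t)).trans (hM (u t) (Set.mem_range_self t))
  have hM2 : ∀ t, |u2 t| ≤ M := fun t =>
    (norm_snd_le (u t)).trans (hM (u t) (Set.mem_range_self t))
  -- derivative of t ↦ φ(-t)
  have hψ : ∀ t : ℝ, HasDerivAt (fun s => φ (-s)) (dφ (-t) * (-1)) t := fun t =>
    (hφ (-t)).comp t (hasDerivAt_neg t)
  -- u2 on [0, ∞)
  have hx2pos : ∀ t ≥ (0:ℝ), u2 t = u2 0 * Real.exp (φ t) := by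
    intro t ht
    have hg : ∀ s, HasDerivAt (fun r => u2 r * Real.exp (-(φ r)))
        ((dφ (-s) * (-u2 s + 3 * u1 s ^ 2 - c) + dφ s * u2 s) * Real.exp (-(φ s)) +
          u2 s * (Real.exp (-(φ s)) * -(dφ s))) s := fun s =>
      (hu2 s).mul ((hφ s).neg.exp)
    have hc := constEq hg ht (fun s hs => by
      rw [hd0 (-s) (neg_nonpos.2 hs.1)]; ring)
    simp only [hφz, neg_zero, Real.exp_zero, mul_one] at hc
    have he : Real.exp (-(φ t)) ≠ 0 := Real.exp_ne_zero _
    field_simp [Real.exp_neg] at hc ⊢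
    rw [← hc, mul_assoc, ← Real.exp_add, neg_add_cancel, Real.exp_zero, mul_one]
  have hu20 : u2 0 = 0 := by
    apply coefZero (K := M)
    intro t ht
    have h1 := hx2pos t (by linarith)
    rw [hφ1 t ht] at h1
    calc |u2 0| * Real.exp t = |u2 0 * Real.exp t| := by
          rw [abs_mul, abs_of_pos (Real.exp_pos t)]
      _ = |u2 t| := by rw [h1]
      _ ≤ M := hM2 t
  have hx2pos' : ∀ t ≥ (0:ℝ), u2 t = 0 := by
    intro t ht; rw [hx2pos t ht, hu20, zero_mul]
  set B := u1 0 with hB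
  -- u1 on [0, ∞)
  have hx1pos : ∀ t ≥ (0:ℝ), u1 t = B * Real.exp (-(φ t)) := by
    intro t ht
    have hg : ∀ s, HasDerivAt (fun r => u1 r * Real.exp (φ r))
        ((dφ (-s) * u1 s + dφ s * (-u1 s + ε * u2 s)) * Real.exp (φ s) +
          u1 s * (Real.exp (φ s) * dφ s)) s := fun s =>
      (hu1 s).mul ((hφ s).exp)
    have hc := constEq hg ht (fun s hs => by
      rw [hd0 (-s) (neg_nonpos.2 hs.1), hx2pos' s hs.1]; ring)
    simp only [hφz, Real.exp_zero, mul_one] at hc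
    rw [Real.exp_neg]
    have he : Real.exp (φ t) ≠ 0 := Real.exp_ne_zero _
    field_simp
    linarith [hc]
  -- u1 on (-∞, 0]
  have hx1neg : ∀ t ≤ (0:ℝ), u1 t = B * Real.exp (-(φ (-t))) := by
    intro t ht
    have hg : ∀ s, HasDerivAt (fun r => u1 r * Real.exp (φ (-r)))
        ((dφ (-s) * u1 s + dφ s * (-u1 s + ε * u2 s)) * Real.exp (φ (-s)) +
          u1 s * (Real.exp (φ (-s)) * (dφ (-s) * (-1)))) s := fun s =>
      (hu1 s).mul ((hψ s).exp)
    have hc := constEq hg ht (fun s hs => by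
      rw [hd0 s hs.2]; ring)
    simp only [neg_zero, hφz, Real.exp_zero, mul_one] at hc
    -- hc : u1 0 * exp (φ 0) = u1 t * exp (φ (-t))  (direction: f b = f a with a = t, b = 0)
    rw [Real.exp_neg]
    have he : Real.exp (φ (-t)) ≠ 0 := Real.exp_ne_zero _
    field_simp
    linarith [hc]
  -- u2 on (-∞, 0]
  have hx2neg : ∀ t ≤ (0:ℝ), u2 t
      = (c - B ^ 2) * Real.exp (φ (-t)) + B ^ 2 * Real.exp (-(2 * φ (-t))) - c := by
    intro t ht
    have hinner : ∀ s, HasDerivAt (fun r => u2 r + c - B ^ 2 * Real.exp (-(2 * φ (-r))))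
        ((dφ (-s) * (-u2 s + 3 * u1 s ^ 2 - c) + dφ s * u2 s)
          - B ^ 2 * (Real.exp (-(2 * φ (-s))) * -(2 * (dφ (-s) * (-1))))) s := by
      intro s
      have h1 : HasDerivAt (fun r => -(2 * φ (-r))) (-(2 * (dφ (-s) * (-1)))) s :=
        ((hψ s).const_mul 2).neg
      exact ((hu2 s).add_const c).sub ((h1.exp).const_mul (B ^ 2))
    have hg : ∀ s, HasDerivAt
        (fun r => (u2 r + c - B ^ 2 * Real.exp (-(2 * φ (-r)))) * Real.exp (-(φ (-r))))
        (((dφ (-s) * (-u2 s + 3 * u1 s ^ 2 - c) + dφ s * u2 s)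
          - B ^ 2 * (Real.exp (-(2 * φ (-s))) * -(2 * (dφ (-s) * (-1)))))
            * Real.exp (-(φ (-s)))
          + (u2 s + c - B ^ 2 * Real.exp (-(2 * φ (-s))))
            * (Real.exp (-(φ (-s))) * -(dφ (-s) * (-1)))) s := fun s =>
      (hinner s).mul (((hψ s).neg).exp)
    have hc := constEq hg ht (fun s hs => by
      have hsq : Real.exp (-(2 * φ (-s))) = Real.exp (-(φ (-s))) ^ 2 := by
        rw [show -(2 * φ (-s)) = -(φ (-s)) + -(φ (-s)) by ring, Real.exp_add, sq]
      rw [hd0 s hs.2, hx1neg s hs.2, hsq]; ring)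
    simp only [neg_zero, hφz, mul_zero, Real.exp_zero, mul_one, hu20, zero_add] at hc
    have h3 : (c - B ^ 2) * Real.exp (φ (-t))
        = u2 t + c - B ^ 2 * Real.exp (-(2 * φ (-t))) := by
      rw [hc, mul_assoc, ← Real.exp_add, neg_add_cancel, Real.exp_zero, mul_one]
    linarith
  -- coefficient of growing mode vanishes
  have hcB : c - B ^ 2 = 0 := by
    apply coefZero (K := M + B ^ 2 + |c|)
    intro t ht
    have h1 := hx2neg (-t) (by linarith)
    rw [neg_neg, hφ1 t ht] at h1
    have h2 : (c - B ^ 2) * Real.exp t = u2 (-t) + c - B ^ 2 * Real.exp (-(2 * t)) := by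
      rw [h1]; ring
    have h3 : |u2 (-t)| ≤ M := hM2 (-t)
    have h4 : Real.exp (-(2 * t)) ≤ 1 := by
      rw [show (1:ℝ) = Real.exp 0 by simp]
      exact Real.exp_le_exp.2 (by linarith)
    have h5 : 0 < Real.exp (-(2 * t)) := Real.exp_pos _
    have h6 : |(c - B ^ 2) * Real.exp t| ≤ M + B ^ 2 + |c| := by
      rw [h2]
      have := abs_le.1 h3
      have hcabs := abs_le.1 (le_refl |c|)
      rw [abs_le]
      constructor <;> nlinarith [le_abs_self c, neg_abs_le c, sq_nonneg B]
    calc |c - B ^ 2| * Real.exp t = |(c - B ^ 2) * Real.exp t| := by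
          rw [abs_mul, abs_of_pos (Real.exp_pos t)]
      _ ≤ M + B ^ 2 + |c| := h6
  refine ⟨?_, ?_, hu20, by linarith [hcB]⟩
  · -- t → -∞
    have hev : u =ᶠ[atBot] (fun t => (B * Real.exp t, B ^ 2 * Real.exp (2 * t) - c)) := by
      filter_upwards [eventually_le_atBot (-1 : ℝ)] with t ht
      have hφt : φ (-t) = -t := hφ1 (-t) (by linarith)
      have h1 := hx1neg t (by linarith)
      have h2 := hx2neg t (by linarith)
      rw [hφt] at h1 h2
      have e1 : u1 t = B * Real.exp t := by rw [h1, neg_neg]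
      have e2 : u2 t = B ^ 2 * Real.exp (2 * t) - c := by
        rw [h2, hcB, show -(2 * -t) = 2 * t by ring]; ring
      exact Prod.ext e1 e2
    have hlim : Tendsto (fun t : ℝ => (B * Real.exp t, B ^ 2 * Real.exp (2 * t) - c))
        atBot (nhds ((0:ℝ), -c)) := by
      have l1 : Tendsto (fun t : ℝ => B * Real.exp t) atBot (nhds 0) := by
        simpa using Real.tendsto_exp_atBot.const_mul B
      have l2 : Tendsto (fun t : ℝ => B ^ 2 * Real.exp (2 * t) - c) atBot (nhds (-c)) := by
        have : Tendsto (fun t : ℝ => 2 * t) atBot atBot :=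
          (tendsto_const_mul_atBot_of_pos (by norm_num)).2 tendsto_id
        simpa using ((Real.tendsto_exp_atBot.comp this).const_mul (B ^ 2)).sub_const c
      exact l1.prodMk_nhds l2
    exact Tendsto.congr' hev.symm hlim
  · -- t → +∞
    have hev : u =ᶠ[atTop] (fun t => (B * Real.exp (-t), (0:ℝ))) := by
      filter_upwards [eventually_ge_atTop (1 : ℝ)] with t ht
      have h1 := hx1pos t (by linarith)
      have h2 := hx2pos' t (by linarith)
      rw [hφ1 t ht] at h1
      exact Prod.ext (by rw [h1] : u1 t = B * Real.exp (-t)) h2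
    have hlim : Tendsto (fun t : ℝ => (B * Real.exp (-t), (0:ℝ))) atTop (nhds ((0:ℝ), (0:ℝ))) := by
      have l1 : Tendsto (fun t : ℝ => B * Real.exp (-t)) atTop (nhds 0) := by
        simpa using (Real.tendsto_exp_atBot.comp tendsto_neg_atTop_atBot).const_mul B
      exact l1.prodMk_nhds tendsto_const_nhds
    exact Tendsto.congr' hev.symm hlim
end

section
/- Fix $c\in\mathbb{R}$ and $\varepsilon>0$. The nonautonomous equation $\dot x=f_c(t,x)$ has exactly two bounded full solutions if $c>0$ (distinguished by their values $u(0)=(\sqrt{c},0)$ and $u(0)=(-\sqrt{c},0)$), exactly one bounded full solution if $c=0$, and no bounded full solution if $c<0$. -/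
/-- A bounded full solution of `ẋ = f_c(t,x)`. -/
def BddSol (c ε : ℝ) (dφ : ℝ → ℝ) (u : ℝ → ℝ × ℝ) : Prop :=
  (∀ t : ℝ, HasDerivAt u (fc c ε dφ t (u t)) t) ∧
  Bornology.IsBounded (Set.range u)

open Real Set Filter

/-- the candidate solution with `u 0 = (a, a^2 - c)` and `a^2 = c` -/
noncomputable def sol (c : ℝ) (φ : ℝ → ℝ) (a : ℝ) : ℝ → ℝ × ℝ :=
  fun t => (a * Real.exp (-(φ t + φ (-t))), c * Real.exp (-(2 * φ (-t))) - c)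

private lemma constOn_Icc {h : ℝ → ℝ} {a b : ℝ} (hab : a ≤ b)
    (hd : ∀ t ∈ Set.Icc a b, HasDerivAt h 0 t) : h b = h a :=
  constant_of_has_deriv_right_zero
    (fun t ht => (hd t ht).continuousAt.continuousWithinAt)
    (fun t ht => (hd t ⟨ht.1, ht.2.le⟩).hasDerivWithinAt) b ⟨hab, le_rfl⟩

private lemma constOn_Ici {h : ℝ → ℝ}
    (hd : ∀ t ≥ (0:ℝ), HasDerivAt h 0 t) : ∀ t ≥ (0:ℝ), h t = h 0 :=
  fun t ht => constOn_Icc ht (fun s hs => hd s hs.1)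

private lemma constOn_Iic {h : ℝ → ℝ}
    (hd : ∀ t ≤ (0:ℝ), HasDerivAt h 0 t) : ∀ t ≤ (0:ℝ), h t = h 0 :=
  fun t ht => (constOn_Icc ht (fun s hs => hd s hs.2)).symm

private lemma exp_cancel {x y s : ℝ} (h : x * Real.exp s = y) :
    x = y * Real.exp (-s) := by
  rw [← h, mul_assoc, ← Real.exp_add, add_neg_cancel, Real.exp_zero, mul_one]

private lemma dphi_zero {φ dφ : ℝ → ℝ} (hφ : ∀ t, HasDerivAt φ (dφ t) t)
    (hdc : Continuous dφ)
    (hφ0 : ∀ t ≤ (0:ℝ), φ t = 0) : ∀ t ≤ (0:ℝ), dφ t = 0 := by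
  have hneg : ∀ t < (0:ℝ), dφ t = 0 := by
    intro t ht
    have h0 : HasDerivAt φ 0 t := by
      have hev : φ =ᶠ[nhds t] (fun _ : ℝ => (0:ℝ)) :=
        Filter.eventually_of_mem (Iio_mem_nhds ht) (fun s hs => hφ0 s hs.le)
      exact (hasDerivAt_const t (0:ℝ)).congr_of_eventuallyEq hev
    exact (hφ t).unique h0
  intro t ht
  rcases lt_or_eq_of_le ht with h | h
  · exact hneg t h
  · subst h
    have h1 : Tendsto dφ (nhdsWithin 0 (Iio 0)) (nhds (dφ 0)) :=
      (hdc.tendsto 0).mono_left nhdsWithin_le_nhds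
    have h2 : Tendsto dφ (nhdsWithin 0 (Iio 0)) (nhds 0) := by
      apply Filter.Tendsto.congr' _ (tendsto_const_nhds (α := ℝ) (x := (0:ℝ)))
      exact Filter.eventually_of_mem self_mem_nhdsWithin (fun s hs => (hneg s hs).symm)
    exact tendsto_nhds_unique h1 h2

private lemma phi_nonneg {φ dφ : ℝ → ℝ} (hφ : ∀ t, HasDerivAt φ (dφ t) t)
    (hφ0 : ∀ t ≤ (0:ℝ), φ t = 0) (hdpos : ∀ t, 0 ≤ dφ t) : ∀ t, 0 ≤ φ t := by
  have hm : Monotone φ := by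
    apply monotone_of_deriv_nonneg (fun t => (hφ t).differentiableAt)
    intro t; rw [(hφ t).deriv]; exact hdpos t
  intro t
  rcases le_total t 0 with h | h
  · rw [hφ0 t h]
  · calc (0:ℝ) = φ 0 := (hφ0 0 le_rfl).symm
      _ ≤ φ t := hm h

private lemma hasDerivAt_phineg {φ dφ : ℝ → ℝ} (hφ : ∀ t, HasDerivAt φ (dφ t) t)
    (t : ℝ) : HasDerivAt (fun s => φ (-s)) (-dφ (-t)) t := by
  have := (hφ (-t)).comp t (hasDerivAt_neg t)
  simp [mul_comm] at this; exact this

private lemma deriv_fst {c ε : ℝ} {dφ : ℝ → ℝ} {w : ℝ → ℝ × ℝ} {t : ℝ}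
    (h : HasDerivAt w (fc c ε dφ t (w t)) t) :
    HasDerivAt (fun s => (w s).1)
      (dφ (-t) * (w t).1 + dφ t * (-(w t).1 + ε * (w t).2)) t := by
  have := (ContinuousLinearMap.fst ℝ ℝ ℝ).hasFDerivAt.comp_hasDerivAt t h
  simp [fc, fminus, fplus] at this; exact this

private lemma deriv_snd {c ε : ℝ} {dφ : ℝ → ℝ} {w : ℝ → ℝ × ℝ} {t : ℝ}
    (h : HasDerivAt w (fc c ε dφ t (w t)) t) :
    HasDerivAt (fun s => (w s).2)
      (dφ (-t) * (-(w t).2 + 3 * (w t).1 ^ 2 - c) + dφ t * (w t).2) t := by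
  have := (ContinuousLinearMap.snd ℝ ℝ ℝ).hasFDerivAt.comp_hasDerivAt t h
  simp [fc, fminus, fplus] at this; exact this

private lemma exp_growth {b C : ℝ} (h : ∀ t ≥ (1:ℝ), |b| * Real.exp t ≤ C) :
    b = 0 := by
  by_contra hb
  have hb' : 0 < |b| := abs_pos.mpr hb
  set t : ℝ := max 1 (C / |b|) with ht
  have h1 : (1:ℝ) ≤ t := le_max_left _ _
  have h2 : C / |b| ≤ t := le_max_right _ _
  have h3 : t + 1 ≤ Real.exp t := Real.add_one_le_exp t
  have h4 := h t h1
  nlinarith [div_le_iff₀ hb' |>.mp h2]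

/-- `sol c φ a` is a solution when `a ^ 2 = c`. -/
private lemma sol_hasDerivAt {c ε : ℝ} {φ dφ : ℝ → ℝ} {a : ℝ} (ha : a ^ 2 = c)
    (hφ : ∀ t, HasDerivAt φ (dφ t) t) (hdc : Continuous dφ)
    (hφ0 : ∀ t ≤ (0:ℝ), φ t = 0) (t : ℝ) :
    HasDerivAt (sol c φ a) (fc c ε dφ t (sol c φ a t)) t := by
  have hd0 := dphi_zero hφ hdc hφ0
  have h1 : HasDerivAt (fun s => a * Real.exp (-(φ s + φ (-s))))
      (a * (Real.exp (-(φ t + φ (-t))) * (-(dφ t + -dφ (-t))))) t :=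
    (((hφ t).add (hasDerivAt_phineg hφ t)).neg.exp).const_mul a
  have h2 : HasDerivAt (fun s => c * Real.exp (-(2 * φ (-s))) - c)
      (c * (Real.exp (-(2 * φ (-t))) * (-(2 * -dφ (-t))))) t :=
    ((((hasDerivAt_phineg hφ t).const_mul 2).neg.exp).const_mul c).sub_const c
  have key : fc c ε dφ t (sol c φ a t) =
      (a * (Real.exp (-(φ t + φ (-t))) * (-(dφ t + -dφ (-t)))),
       c * (Real.exp (-(2 * φ (-t))) * (-(2 * -dφ (-t))))) := by
    rcases le_total t 0 with h | h
    · have hdt : dφ t = 0 := hd0 t h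
      have hpt : φ t = 0 := hφ0 t h
      have e1 : Real.exp (-(φ t + φ (-t))) = Real.exp (-(φ (-t))) := by
        rw [hpt, zero_add]
      have e2 : Real.exp (-(φ (-t))) ^ 2 = Real.exp (-(2 * φ (-t))) := by
        rw [pow_two, ← Real.exp_add]; ring_nf
      have e3 : (a * Real.exp (-(φ (-t)))) ^ 2
          = c * Real.exp (-(2 * φ (-t))) := by
        rw [mul_pow, e2, ha]
      simp only [fc, fminus, fplus, sol, Prod.smul_mk, smul_eq_mul, Prod.mk_add_mk,
        Prod.mk.injEq]
      constructor
      · rw [hdt]; ring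
      · rw [hdt, e1, e3]; ring
    · have hdt : dφ (-t) = 0 := hd0 (-t) (neg_nonpos.mpr h)
      have hpt : φ (-t) = 0 := hφ0 (-t) (neg_nonpos.mpr h)
      simp only [fc, fminus, fplus, sol, Prod.smul_mk, smul_eq_mul, Prod.mk_add_mk,
        Prod.mk.injEq]
      rw [hdt, hpt]
      norm_num
      ring
  rw [key]
  exact h1.prodMk h2

private lemma sol_bounded {c : ℝ} {φ dφ : ℝ → ℝ} (a : ℝ)
    (hφ : ∀ t, HasDerivAt φ (dφ t) t)
    (hφ0 : ∀ t ≤ (0:ℝ), φ t = 0) (hdpos : ∀ t, 0 ≤ dφ t) :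
    Bornology.IsBounded (Set.range (sol c φ a)) := by
  have hnn := phi_nonneg hφ hφ0 hdpos
  rw [isBounded_iff_forall_norm_le]
  refine ⟨|a| + |c|, ?_⟩
  rintro x ⟨t, rfl⟩
  have e1 : Real.exp (-(φ t + φ (-t))) ≤ 1 :=
    Real.exp_le_one_iff.mpr (by nlinarith [hnn t, hnn (-t)])
  have e2 : Real.exp (-(2 * φ (-t))) ≤ 1 :=
    Real.exp_le_one_iff.mpr (by nlinarith [hnn (-t)])
  have p1 : (0:ℝ) < Real.exp (-(φ t + φ (-t))) := Real.exp_pos _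
  have p2 : (0:ℝ) < Real.exp (-(2 * φ (-t))) := Real.exp_pos _
  rw [Prod.norm_def]
  apply max_le
  · simp only [Real.norm_eq_abs, sol, abs_mul]
    have : |Real.exp (-(φ t + φ (-t)))| ≤ 1 := by rw [abs_of_pos p1]; exact e1
    nlinarith [abs_nonneg a, abs_nonneg c]
  · simp only [Real.norm_eq_abs, sol]
    have : |c * Real.exp (-(2 * φ (-t))) - c| ≤ |c| := by
      rw [abs_le]
      rcases abs_cases c with ⟨h1, h2⟩ | ⟨h1, h2⟩ <;> constructor <;> nlinarith
    nlinarith [abs_nonneg a]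

/-- every bounded solution equals `sol c φ a` with `a = (w 0).1`, `a ^ 2 = c`. -/
private lemma bddSol_eq {c ε : ℝ} {φ dφ : ℝ → ℝ} {w : ℝ → ℝ × ℝ}
    (hε : 0 < ε)
    (hφ : ∀ t, HasDerivAt φ (dφ t) t) (hdc : Continuous dφ)
    (hφ0 : ∀ t ≤ (0:ℝ), φ t = 0) (hφ1 : ∀ t ≥ (1:ℝ), φ t = t)
    (hdpos : ∀ t, 0 ≤ dφ t) (hw : BddSol c ε dφ w) :
    ((w 0).1) ^ 2 = c ∧ w = sol c φ ((w 0).1) := by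
  obtain ⟨hsol, hbdd⟩ := hw
  have hd0 := dphi_zero hφ hdc hφ0
  obtain ⟨C, hC⟩ := isBounded_iff_forall_norm_le.mp hbdd
  have hC' : ∀ t, ‖w t‖ ≤ C := fun t => hC _ ⟨t, rfl⟩
  have hC1 : ∀ t, |(w t).1| ≤ C := fun t =>
    le_trans (norm_fst_le (w t)) (hC' t)
  have hC2 : ∀ t, |(w t).2| ≤ C := fun t =>
    le_trans (norm_snd_le (w t)) (hC' t)
  set a := (w 0).1 with ha
  have hp0 : φ 0 = 0 := hφ0 0 le_rfl
  -- step 1: w₂ on Ici 0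
  have step1 : ∀ t ≥ (0:ℝ), (w t).2 = (w 0).2 * Real.exp (φ t) := by
    have hder : ∀ t ≥ (0:ℝ),
        HasDerivAt (fun s => (w s).2 * Real.exp (-(φ s))) 0 t := by
      intro t ht
      have h := (deriv_snd (hsol t)).mul ((hφ t).neg.exp)
      have hz : dφ (-t) = 0 := hd0 (-t) (neg_nonpos.mpr ht)
      rw [hz] at h
      convert h using 1
      case e'_9 => ring
      all_goals rfl
    intro t ht
    have h0 := constOn_Ici hder t ht
    simp only [hp0, neg_zero, Real.exp_zero, mul_one] at h0
    have h1 : (w t).2 * Real.exp (-(φ t)) = (w 0).2 := h0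
    have h2 : (w t).2 * Real.exp (-(φ t)) * Real.exp (φ t)
        = (w 0).2 * Real.exp (φ t) := by rw [h1]
    rw [mul_assoc, ← Real.exp_add, neg_add_cancel, Real.exp_zero, mul_one] at h2
    exact h2
  -- step 2: w₂ 0 = 0
  have w20 : (w 0).2 = 0 := by
    apply exp_growth (C := C)
    intro t ht
    have h1 := step1 t (le_trans zero_le_one ht)
    have h2 := hC2 t
    rw [h1, hφ1 t ht] at h2
    calc |(w 0).2| * Real.exp t = |(w 0).2 * Real.exp t| := by
          rw [abs_mul, abs_of_pos (Real.exp_pos t)]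
      _ ≤ C := h2
  have w2zero : ∀ t ≥ (0:ℝ), (w t).2 = 0 := by
    intro t ht; rw [step1 t ht, w20, zero_mul]
  -- step 3: w₁ on Ici 0
  have step3 : ∀ t ≥ (0:ℝ), (w t).1 = a * Real.exp (-(φ t)) := by
    have hder : ∀ t ≥ (0:ℝ),
        HasDerivAt (fun s => (w s).1 * Real.exp (φ s)) 0 t := by
      intro t ht
      have h := (deriv_fst (hsol t)).mul ((hφ t).exp)
      have hz : dφ (-t) = 0 := hd0 (-t) (neg_nonpos.mpr ht)
      have hw2 : (w t).2 = 0 := w2zero t ht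
      rw [hz, hw2] at h
      convert h using 1
      case e'_9 => ring
      all_goals rfl
    intro t ht
    have h0 := constOn_Ici hder t ht
    simp only [hp0, Real.exp_zero, mul_one] at h0
    exact exp_cancel h0
  -- step 4: w₁ on Iic 0
  have step4 : ∀ t ≤ (0:ℝ), (w t).1 = a * Real.exp (-(φ (-t))) := by
    have hder : ∀ t ≤ (0:ℝ),
        HasDerivAt (fun s => (w s).1 * Real.exp (φ (-s))) 0 t := by
      intro t ht
      have h := (deriv_fst (hsol t)).mul ((hasDerivAt_phineg hφ t).exp)
      have hz : dφ t = 0 := hd0 t ht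
      rw [hz] at h
      convert h using 1
      case e'_9 => ring
      all_goals rfl
    intro t ht
    have h0 := constOn_Iic hder t ht
    simp only [neg_zero, hp0, Real.exp_zero, mul_one] at h0
    exact exp_cancel h0
  -- step 5: g on Iic 0
  have step5 : ∀ t ≤ (0:ℝ),
      (w t).2 - (w t).1 ^ 2 + c = (c - a ^ 2) * Real.exp (φ (-t)) := by
    have hder : ∀ t ≤ (0:ℝ),
        HasDerivAt (fun s => ((w s).2 - (w s).1 ^ 2 + c) * Real.exp (-(φ (-s)))) 0 t := by
      intro t ht
      have h := (((deriv_snd (hsol t)).sub ((deriv_fst (hsol t)).pow 2)).add_const c).mul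
        ((hasDerivAt_phineg hφ t).neg.exp)
      have hz : dφ t = 0 := hd0 t ht
      rw [hz] at h
      convert h using 1
      case e'_9 =>
        push_cast [Pi.sub_apply, Pi.pow_apply]
        ring
      all_goals rfl
    intro t ht
    have h0 := constOn_Iic hder t ht
    simp only [neg_zero, hp0, Real.exp_zero, mul_one, w20] at h0
    have h1 : ((w t).2 - (w t).1 ^ 2 + c) * Real.exp (-(φ (-t)))
        = 0 - a ^ 2 + c := h0
    have h3 := exp_cancel (s := -(φ (-t))) h1
    rw [neg_neg] at h3
    rw [h3]
    ring
  -- step 6: a² = c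
  have hac : a ^ 2 = c := by
    have hC0 : 0 ≤ C := le_trans (norm_nonneg (w 0)) (hC' 0)
    have key : c - a ^ 2 = 0 := by
      apply exp_growth (C := C + C ^ 2 + |c|)
      intro s hs
      have ht : -s ≤ (0:ℝ) := by linarith
      have h5 := step5 (-s) ht
      rw [neg_neg, hφ1 s hs] at h5
      have hb : |(w (-s)).2 - (w (-s)).1 ^ 2 + c| ≤ C + C ^ 2 + |c| := by
        have := hC1 (-s); have := hC2 (-s)
        have h1 : |(w (-s)).1 ^ 2| ≤ C ^ 2 := by
          rw [abs_pow]
          exact pow_le_pow_left₀ (abs_nonneg _) (hC1 (-s)) 2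
        calc |(w (-s)).2 - (w (-s)).1 ^ 2 + c|
            ≤ |(w (-s)).2| + |(w (-s)).1 ^ 2| + |c| := by
              apply le_trans (abs_add_le _ _); gcongr; exact abs_sub _ _
          _ ≤ C + C ^ 2 + |c| := by gcongr <;> assumption
      rw [h5, abs_mul, abs_of_pos (Real.exp_pos s)] at hb
      exact hb
    linarith
  refine ⟨hac, ?_⟩
  funext t
  have hexp2 : ∀ x : ℝ, Real.exp (-x) ^ 2 = Real.exp (-(2 * x)) := by
    intro x; rw [pow_two, ← Real.exp_add]; ring_nf
  rcases le_total t 0 with h | h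
  · have hpt : φ t = 0 := hφ0 t h
    have h4 := step4 t h
    have h5 := step5 t h
    rw [sub_eq_zero.mpr hac.symm] at h5
    have h5' : (w t).2 = (w t).1 ^ 2 - c := by
      rw [zero_mul] at h5; linarith
    apply Prod.ext
    · simp only [sol]
      rw [h4, hpt, zero_add]
    · simp only [sol]
      rw [h5', h4, mul_pow, hexp2, hac]
  · have hpt : φ (-t) = 0 := hφ0 (-t) (neg_nonpos.mpr h)
    apply Prod.ext
    · simp only [sol]
      rw [step3 t h, hpt, add_zero]
    · simp only [sol]
      rw [w2zero t h, hpt, mul_zero, neg_zero, Real.exp_zero, mul_one, sub_self]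

/-- `ẋ = f_c(t,x)` has exactly two bounded full solutions if
`c > 0` (with `u(0) = (±√c, 0)`), exactly one if `c = 0`, and none if
`c < 0`. -/
theorem stmt10 (c ε : ℝ) (hε : 0 < ε) (φ dφ : ℝ → ℝ)
    (hφ : ∀ t : ℝ, HasDerivAt φ (dφ t) t) (hdc : Continuous dφ)
    (hφ0 : ∀ t ≤ (0:ℝ), φ t = 0) (hφ1 : ∀ t ≥ (1:ℝ), φ t = t)
    (hdpos : ∀ t : ℝ, 0 ≤ dφ t) :
    (0 < c → ∃ u v : ℝ → ℝ × ℝ,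
      BddSol c ε dφ u ∧ BddSol c ε dφ v ∧
      u 0 = (Real.sqrt c, 0) ∧ v 0 = (-Real.sqrt c, 0) ∧ u ≠ v ∧
      ∀ w : ℝ → ℝ × ℝ, BddSol c ε dφ w → w = u ∨ w = v) ∧
    (c = 0 → ∃! u : ℝ → ℝ × ℝ, BddSol c ε dφ u) ∧
    (c < 0 → ¬ ∃ u : ℝ → ℝ × ℝ, BddSol c ε dφ u) := by
  have hp0 : φ 0 = 0 := hφ0 0 le_rfl
  have sol0 : ∀ a : ℝ, sol c φ a 0 = (a, 0) := by
    intro a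
    simp [sol, hp0]
  have solBdd : ∀ a : ℝ, a ^ 2 = c → BddSol c ε dφ (sol c φ a) := by
    intro a ha
    exact ⟨fun t => sol_hasDerivAt ha hφ hdc hφ0 t, sol_bounded a hφ hφ0 hdpos⟩
  refine ⟨?_, ?_, ?_⟩
  · intro hc
    have hsq : Real.sqrt c ^ 2 = c := Real.sq_sqrt hc.le
    have hsq' : (-Real.sqrt c) ^ 2 = c := by rw [neg_pow]; simp [hsq]
    refine ⟨sol c φ (Real.sqrt c), sol c φ (-Real.sqrt c),
      solBdd _ hsq, solBdd _ hsq', sol0 _, sol0 _, ?_, ?_⟩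
    · intro heq
      have h0 := congrFun heq 0
      rw [sol0, sol0, Prod.mk.injEq] at h0
      have := Real.sqrt_pos.mpr hc
      linarith [h0.1]
    · intro w hw
      obtain ⟨hac, heq⟩ := bddSol_eq hε hφ hdc hφ0 hφ1 hdpos hw
      have : ((w 0).1 - Real.sqrt c) * ((w 0).1 + Real.sqrt c) = 0 := by
        nlinarith
      rcases mul_eq_zero.mp this with h | h
      · left; rw [heq, sub_eq_zero.mp h]
      · right
        have h' : (w 0).1 = -Real.sqrt c := by linarith
        rw [heq, h']
  · intro hc
    subst hc
    refine ⟨sol 0 φ 0, solBdd 0 (by norm_num), ?_⟩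
    intro w hw
    obtain ⟨hac, heq⟩ := bddSol_eq hε hφ hdc hφ0 hφ1 hdpos hw
    have : (w 0).1 = 0 := by nlinarith
    rw [heq, this]
  · intro hc ⟨w, hw⟩
    obtain ⟨hac, _⟩ := bddSol_eq hε hφ hdc hφ0 hφ1 hdpos hw
    nlinarith [sq_nonneg ((w 0).1)]
end

section
/- Fix $c\in\mathbb{R}$ and $\varepsilon>0$. The nonautonomous equation $\dot x=g_c(t,x)$ has exactly one bounded full solution $v:\mathbb{R}\to\mathbb{R}^2$; it satisfies $v(t)=(0,0)$ for all $t\le 0$, $v(t)\to(0,0)$ as $t\to-\infty$, and $v(t)\to(0,-c)$ as $t\to+\infty$. -/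
open Real Filter Set in
private lemma gc_aux_constancy {f : ℝ → ℝ} {a b : ℝ} (hab : a ≤ b)
    (h : ∀ t, a ≤ t → t ≤ b → HasDerivAt f 0 t) : f b = f a :=
  constant_of_has_deriv_right_zero
    (fun t ht => (h t ht.1 ht.2).continuousAt.continuousWithinAt)
    (fun t ht => (h t ht.1 ht.2.le).hasDerivWithinAt) b ⟨hab, le_rfl⟩

/-- `g_c(t,x) = φ'(-t) f⁺_ε(x) + φ'(t) f⁻_c(x)`, where `dφ = φ'`. -/
def gc (c ε : ℝ) (dφ : ℝ → ℝ) (t : ℝ) (x : ℝ × ℝ) : ℝ × ℝ :=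
  dφ (-t) • fplus ε x + dφ t • fminus c x

private lemma gc_fst (c ε : ℝ) (dφ : ℝ → ℝ) (t : ℝ) (x : ℝ × ℝ) :
    (gc c ε dφ t x).1 = dφ (-t) * (-x.1 + ε * x.2) + dφ t * x.1 := by
  simp [gc, fplus, fminus]

private lemma gc_snd (c ε : ℝ) (dφ : ℝ → ℝ) (t : ℝ) (x : ℝ × ℝ) :
    (gc c ε dφ t x).2 = dφ (-t) * x.2 + dφ t * (-x.2 + 3 * x.1 ^ 2 - c) := by
  simp [gc, fplus, fminus]

open Real Filter Set

/-- `ẋ = g_c(t,x)` has exactly one bounded full solution `v`;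
it satisfies `v(t) = (0,0)` for `t ≤ 0`, `v(t) → (0,0)` as `t → -∞` and
`v(t) → (0,-c)` as `t → +∞`. -/
theorem stmt12 (c ε : ℝ) (hε : 0 < ε) (φ dφ : ℝ → ℝ)
    (hφ : ∀ t : ℝ, HasDerivAt φ (dφ t) t) (hdc : Continuous dφ)
    (hφ0 : ∀ t ≤ (0:ℝ), φ t = 0) (hφ1 : ∀ t ≥ (1:ℝ), φ t = t)
    (hdpos : ∀ t : ℝ, 0 ≤ dφ t) :
    ∃ v : ℝ → ℝ × ℝ,
      ((∀ t : ℝ, HasDerivAt v (gc c ε dφ t (v t)) t) ∧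
        Bornology.IsBounded (Set.range v)) ∧
      (∀ v' : ℝ → ℝ × ℝ,
        ((∀ t : ℝ, HasDerivAt v' (gc c ε dφ t (v' t)) t) ∧
          Bornology.IsBounded (Set.range v')) → v' = v) ∧
      (∀ t ≤ (0:ℝ), v t = ((0:ℝ), (0:ℝ))) ∧
      Filter.Tendsto v Filter.atBot (nhds ((0:ℝ), (0:ℝ))) ∧
      Filter.Tendsto v Filter.atTop (nhds ((0:ℝ), -c)) := by
  -- dφ vanishes on nonpositives
  have hd0 : ∀ s : ℝ, s ≤ 0 → dφ s = 0 := by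
    have hneg : ∀ s : ℝ, s < 0 → dφ s = 0 := by
      intro s hs
      have hev : φ =ᶠ[nhds s] fun _ => (0:ℝ) := by
        filter_upwards [Iio_mem_nhds hs] with x hx
        exact hφ0 x (le_of_lt hx)
      have h1 : HasDerivAt φ 0 s :=
        (hasDerivAt_const s (0:ℝ)).congr_of_eventuallyEq hev
      exact (hφ s).unique h1
    intro s hs
    rcases lt_or_eq_of_le hs with h | h
    · exact hneg s h
    · subst h
      have h1 : Tendsto dφ (nhdsWithin 0 (Iio 0)) (nhds (dφ 0)) :=
        (hdc.tendsto 0).mono_left nhdsWithin_le_nhds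
      have h2 : Tendsto dφ (nhdsWithin (0:ℝ) (Iio 0)) (nhds 0) := by
        apply Tendsto.congr' _ tendsto_const_nhds
        filter_upwards [self_mem_nhdsWithin] with x hx
        exact (hneg x hx).symm
      exact tendsto_nhds_unique h1 h2
  have hφz : φ 0 = 0 := hφ0 0 le_rfl
  have hmono : Monotone φ := by
    apply monotone_of_deriv_nonneg (fun t => (hφ t).differentiableAt)
    intro t; rw [(hφ t).deriv]; exact hdpos t
  have hφnn : ∀ t, 0 ≤ φ t := by
    intro t
    rcases le_total t 0 with h | h
    · rw [hφ0 t h]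
    · rw [← hφz]; exact hmono h
  set v : ℝ → ℝ × ℝ := fun t => ((0:ℝ), c * Real.exp (-φ t) - c) with hv_def
  -- v is a full solution
  have hvd : ∀ t, HasDerivAt v (gc c ε dφ t (v t)) t := by
    intro t
    have h2 : HasDerivAt (fun s => c * Real.exp (-φ s) - c)
        (c * (Real.exp (-φ t) * -dφ t)) t := (((hφ t).neg.exp).const_mul c).sub_const c
    have hp : HasDerivAt v ((0:ℝ), c * (Real.exp (-φ t) * -dφ t)) t :=
      (hasDerivAt_const t (0:ℝ)).prodMk h2
    have key : gc c ε dφ t (v t) = ((0:ℝ), c * (Real.exp (-φ t) * -dφ t)) := by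
      rcases le_total t 0 with h | h
      · have e2 : φ t = 0 := hφ0 t h
        simp [gc, fplus, fminus, hv_def, e2, Prod.ext_iff]
        ring
      · have e1 : dφ (-t) = 0 := hd0 (-t) (neg_nonpos.mpr h)
        simp [gc, fplus, fminus, hv_def, e1, Prod.ext_iff]
        ring
    rw [key]; exact hp
  -- v is bounded
  have hvb : Bornology.IsBounded (Set.range v) := by
    rw [isBounded_iff_forall_norm_le]
    refine ⟨|c|, ?_⟩
    rintro x ⟨t, rfl⟩
    have h1 : Real.exp (-φ t) ≤ 1 := Real.exp_le_one_iff.mpr (neg_nonpos.mpr (hφnn t))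
    have h2 : (0:ℝ) < Real.exp (-φ t) := Real.exp_pos _
    rw [Prod.norm_def]
    simp only [hv_def, Real.norm_eq_abs, abs_zero]
    apply max_le (abs_nonneg c)
    have : c * Real.exp (-φ t) - c = c * (Real.exp (-φ t) - 1) := by ring
    rw [this, abs_mul]
    nlinarith [abs_nonneg c, abs_le.mpr (⟨by linarith, by linarith⟩ :
      -1 ≤ Real.exp (-φ t) - 1 ∧ Real.exp (-φ t) - 1 ≤ 1)]
  -- v vanishes on nonpositives
  have hv0 : ∀ t ≤ (0:ℝ), v t = ((0:ℝ), (0:ℝ)) := by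
    intro t ht
    simp [hv_def, hφ0 t ht]
  -- limit at -∞
  have hbot : Tendsto v atBot (nhds ((0:ℝ), (0:ℝ))) := by
    apply Tendsto.congr' _ tendsto_const_nhds
    filter_upwards [eventually_le_atBot (0:ℝ)] with t ht
    exact (hv0 t ht).symm
  -- limit at +∞
  have htop : Tendsto v atTop (nhds ((0:ℝ), -c)) := by
    have h2 : Tendsto (fun t => c * Real.exp (-φ t) - c) atTop (nhds (-c)) := by
      have he : Tendsto (fun t => Real.exp (-φ t)) atTop (nhds 0) := by
        apply Real.tendsto_exp_atBot.comp
        apply Tendsto.congr' _ tendsto_neg_atTop_atBot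
        filter_upwards [eventually_ge_atTop (1:ℝ)] with t ht
        rw [hφ1 t ht]
      have := (he.const_mul c).sub_const c
      simpa using this
    exact tendsto_const_nhds.prodMk_nhds h2
  refine ⟨v, ⟨hvd, hvb⟩, ?_, hv0, hbot, htop⟩
  -- uniqueness
  rintro v' ⟨hv'd, hv'b⟩
  obtain ⟨M, hM⟩ := isBounded_iff_forall_norm_le.mp hv'b
  set x1 : ℝ → ℝ := fun t => (v' t).1 with hx1
  set x2 : ℝ → ℝ := fun t => (v' t).2 with hx2
  have hM1 : ∀ t, |x1 t| ≤ M := fun t =>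
    le_trans (by rw [← Real.norm_eq_abs]; exact norm_fst_le (v' t)) (hM _ ⟨t, rfl⟩)
  have h1d : ∀ t, HasDerivAt x1 (dφ (-t) * (-x1 t + ε * x2 t) + dφ t * x1 t) t := by
    intro t
    have h : HasDerivAt (fun s => (v' s).1) (gc c ε dφ t (v' t)).1 t := (hv'd t).fst
    rwa [gc_fst] at h
  have h2d : ∀ t, HasDerivAt x2 (dφ (-t) * x2 t + dφ t * (-x2 t + 3 * x1 t ^ 2 - c)) t := by
    intro t
    have h : HasDerivAt (fun s => (v' s).2) (gc c ε dφ t (v' t)).2 t := (hv'd t).snd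
    rwa [gc_snd] at h
  have hφneg : ∀ t : ℝ, HasDerivAt (fun s => φ (-s)) (-dφ (-t)) t := by
    intro t
    have := (hφ (-t)).comp t (hasDerivAt_neg t)
    exact (by simpa using this : HasDerivAt (φ ∘ Neg.neg) (-dφ (-t)) t)
  -- on [0,∞), x1 t = x1 0 * exp (φ t)
  have R1 : ∀ t : ℝ, 0 ≤ t → x1 t = x1 0 * Real.exp (φ t) := by
    intro t ht
    have hkey : x1 t * Real.exp (-φ t) = x1 0 * Real.exp (-φ 0) := by
      apply gc_aux_constancy ht
      intro s hs0 _
      have hder := (h1d s).mul ((hφ s).neg.exp)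
      have hz : (dφ (-s) * (-x1 s + ε * x2 s) + dφ s * x1 s) * Real.exp (-φ s)
          + x1 s * (Real.exp (-φ s) * -dφ s) = 0 := by
        rw [hd0 (-s) (neg_nonpos.mpr hs0)]; ring
      simp only [Pi.neg_apply] at hder; rw [hz] at hder; exact hder
    rw [hφz] at hkey
    have h2 := congrArg (· * Real.exp (φ t)) hkey
    simp only [mul_assoc, ← Real.exp_add] at h2
    simpa using h2
  -- boundedness forces x1 0 = 0
  have R2 : x1 0 = 0 := by
    by_contra hne
    have hpos : 0 < |x1 0| := abs_pos.mpr hne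
    have hb : ∀ t : ℝ, 1 ≤ t → |x1 0| * Real.exp t ≤ M := by
      intro t ht
      have := hM1 t
      rw [R1 t (by linarith), abs_mul, abs_of_pos (Real.exp_pos _), hφ1 t ht] at this
      exact this
    have htend : Tendsto (fun t => |x1 0| * Real.exp t) atTop atTop :=
      Tendsto.const_mul_atTop hpos Real.tendsto_exp_atTop
    obtain ⟨t, ht1, ht2⟩ := ((tendsto_atTop.mp htend (M + 1)).and (eventually_ge_atTop 1)).exists
    linarith [hb t ht2]
  -- on (-∞,0], x2 t = x2 0 * exp (-φ (-t))
  have R3 : ∀ t : ℝ, t ≤ 0 → x2 t = x2 0 * Real.exp (-φ (-t)) := by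
    intro t ht
    have hkey : x2 0 * Real.exp (φ (-0)) = x2 t * Real.exp (φ (-t)) := by
      apply gc_aux_constancy (f := fun s => x2 s * Real.exp (φ (-s))) ht
      intro s _ hs0
      have hder := (h2d s).mul ((hφneg s).exp)
      have hz : (dφ (-s) * x2 s + dφ s * (-x2 s + 3 * x1 s ^ 2 - c)) * Real.exp (φ (-s))
          + x2 s * (Real.exp (φ (-s)) * -dφ (-s)) = 0 := by
        rw [hd0 s hs0]; ring
      rwa [hz] at hder
    rw [neg_zero, hφz] at hkey
    simp only [Real.exp_zero, mul_one] at hkey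
    have h2 := congrArg (· * Real.exp (-φ (-t))) hkey.symm
    simp only [mul_assoc, ← Real.exp_add] at h2
    simpa using h2
  -- on (-∞,0], closed form for x1
  have R4 : ∀ t : ℝ, t ≤ 0 →
      x1 t = ε * x2 0 / 2 * (Real.exp (-φ (-t)) - Real.exp (φ (-t))) := by
    intro t ht
    set K := ε * x2 0 / 2 with hK
    have hkey : x1 0 * Real.exp (-φ (-0)) - K * Real.exp (-(2 * φ (-0)))
        = x1 t * Real.exp (-φ (-t)) - K * Real.exp (-(2 * φ (-t))) := by
      apply gc_aux_constancy
        (f := fun s => x1 s * Real.exp (-φ (-s)) - K * Real.exp (-(2 * φ (-s)))) ht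
      intro s hs hs0
      have hdm : HasDerivAt (fun r => Real.exp (-φ (-r))) (Real.exp (-φ (-s)) * dφ (-s)) s := by
        have := ((hφneg s).neg).exp
        simpa using this
      have hdm2 : HasDerivAt (fun r => Real.exp (-(2 * φ (-r))))
          (Real.exp (-(2 * φ (-s))) * (2 * dφ (-s))) s := by
        have := (((hφneg s).const_mul 2).neg).exp
        simpa using this
      have hder := ((h1d s).mul hdm).sub ((hasDerivAt_const s K).mul hdm2)
      have hee : Real.exp (-(2 * φ (-s))) = Real.exp (-φ (-s)) * Real.exp (-φ (-s)) := by
        rw [← Real.exp_add]; congr 1; ring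
      have hz : (dφ (-s) * (-x1 s + ε * x2 s) + dφ s * x1 s) * Real.exp (-φ (-s))
          + x1 s * (Real.exp (-φ (-s)) * dφ (-s))
          - (0 * Real.exp (-(2 * φ (-s))) + K * (Real.exp (-(2 * φ (-s))) * (2 * dφ (-s)))) = 0 := by
        rw [hd0 s hs0, R3 s hs0, hee, hK]; ring
      rwa [hz] at hder
    rw [neg_zero, hφz, R2] at hkey
    simp only [mul_zero, neg_zero, Real.exp_zero, mul_one, zero_mul, zero_sub] at hkey
    have hee : Real.exp (-(2 * φ (-t))) = Real.exp (-φ (-t)) * Real.exp (-φ (-t)) := by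
      rw [← Real.exp_add]; congr 1; ring
    rw [hee] at hkey
    have hinv : Real.exp (-φ (-t)) * Real.exp (φ (-t)) = 1 := by
      rw [← Real.exp_add]; simp
    linear_combination (-Real.exp (φ (-t))) * hkey + (K * Real.exp (-φ (-t)) - x1 t) * hinv
  -- boundedness forces x2 0 = 0
  have R5 : x2 0 = 0 := by
    by_contra hne
    have hpos : 0 < |ε * x2 0 / 2| := by
      rw [abs_pos]
      positivity
    have hb : ∀ t : ℝ, 1 ≤ t → |ε * x2 0 / 2| * (Real.exp t - 1) ≤ M := by
      intro t ht
      have h1 : (-t : ℝ) ≤ 0 := by linarith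
      have := hM1 (-t)
      rw [R4 (-t) h1, abs_mul, neg_neg, hφ1 t ht] at this
      have habs : |Real.exp (-t) - Real.exp t| = Real.exp t - Real.exp (-t) := by
        rw [abs_sub_comm, abs_of_nonneg]
        have := Real.exp_le_exp.mpr (show -t ≤ t by linarith)
        linarith
      rw [habs] at this
      have hle : Real.exp t - 1 ≤ Real.exp t - Real.exp (-t) := by
        have : Real.exp (-t) ≤ 1 := Real.exp_le_one_iff.mpr (by linarith)
        linarith
      nlinarith
    have htend : Tendsto (fun t => |ε * x2 0 / 2| * (Real.exp t - 1)) atTop atTop := by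
      apply Tendsto.const_mul_atTop hpos
      exact Filter.tendsto_atTop_add_const_right _ _ Real.tendsto_exp_atTop
    obtain ⟨t, ht1, ht2⟩ := ((tendsto_atTop.mp htend (M + 1)).and (eventually_ge_atTop 1)).exists
    linarith [hb t ht2]
  -- conclude v' = v
  funext t
  have hx1z : ∀ s : ℝ, x1 s = 0 := by
    intro s
    rcases le_total s 0 with h | h
    · rw [R4 s h, R5]; ring
    · rw [R1 s h, R2]; ring
  have hx2v : x2 t = c * Real.exp (-φ t) - c := by
    rcases le_total t 0 with h | h
    · rw [R3 t h, R5, hφ0 t h]; simp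
    · have hkey : (x2 t + c) * Real.exp (φ t) = (x2 0 + c) * Real.exp (φ 0) := by
        apply gc_aux_constancy h
        intro s hs0 _
        have hder := ((h2d s).add_const c).mul ((hφ s).exp)
        have hz : (dφ (-s) * x2 s + dφ s * (-x2 s + 3 * x1 s ^ 2 - c)) * Real.exp (φ s)
            + (x2 s + c) * (Real.exp (φ s) * dφ s) = 0 := by
          rw [hd0 (-s) (neg_nonpos.mpr hs0), hx1z s]; ring
        rwa [hz] at hder
      rw [hφz, R5, Real.exp_zero, mul_one, zero_add] at hkey
      have hinv : Real.exp (φ t) * Real.exp (-φ t) = 1 := by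
        rw [← Real.exp_add]; simp
      linear_combination Real.exp (-φ t) * hkey - (x2 t + c) * hinv
  have hvt : v' t = (x1 t, x2 t) := rfl
  rw [hvt, hx1z t, hx2v]
end

section
/- Fix $c\in\mathbb{R}$ and $\varepsilon>0$, and let $v:\mathbb{R}\to\mathbb{R}^2$ be the unique bounded full solution of $\dot x=g_c(t,x)$. Then $v$ is weakly hyperbolic: the linearized equation $\dot w=\phi'(-t)\,Df^{+}_\varepsilon(v(t))\,w+\phi'(t)\,Df^{-}_c(v(t))\,w$ has no bounded full solution $w:\mathbb{R}\to\mathbb{R}^2$ other than $w\equiv 0$. -/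
/-- Jacobian of `f⁻_c` at `x`, applied to `w`:
`Df⁻_c(x) w = (w₁, 6x₁w₁ - w₂)`. -/
def Dfminus (x w : ℝ × ℝ) : ℝ × ℝ := (w.1, 6 * x.1 * w.1 - w.2)

/-- Jacobian of `f⁺_ε`, applied to `w`: `Df⁺_ε w = (-w₁ + εw₂, w₂)`. -/
def Dfplus (ε : ℝ) (w : ℝ × ℝ) : ℝ × ℝ := (-w.1 + ε * w.2, w.2)

/-- A function whose derivative vanishes on `[a,b]` takes the same value at `a` and `b`. -/
lemma constOn {f F : ℝ → ℝ} (hf : ∀ t, HasDerivAt f (F t) t) {a b : ℝ} (hab : a ≤ b)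
    (hF : ∀ x, a ≤ x → x ≤ b → F x = 0) : f b = f a := by
  have hcont : ContinuousOn f (Set.Icc a b) := fun x _ =>
    (hf x).continuousAt.continuousWithinAt
  have hd : ∀ x ∈ Set.Ico a b, HasDerivWithinAt f 0 (Set.Ici x) x := by
    intro x hx
    have := (hf x).hasDerivWithinAt (s := Set.Ici x)
    rwa [hF x hx.1 hx.2.le] at this
  exact constant_of_has_deriv_right_zero hcont hd b (Set.right_mem_Icc.2 hab)

/-- The (unique) bounded full solution `v` of `ẋ = g_c(t,x)`
is weakly hyperbolic: the linearization
`ẇ = φ'(-t) Df⁺_ε w + φ'(t) Df⁻_c(v(t)) w` has no bounded full solution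
other than `w ≡ 0`. -/
theorem stmt13 (c ε : ℝ) (hε : 0 < ε) (φ dφ : ℝ → ℝ)
    (hφ : ∀ t : ℝ, HasDerivAt φ (dφ t) t) (hdc : Continuous dφ)
    (hφ0 : ∀ t ≤ (0:ℝ), φ t = 0) (hφ1 : ∀ t ≥ (1:ℝ), φ t = t)
    (hdpos : ∀ t : ℝ, 0 ≤ dφ t)
    (v : ℝ → ℝ × ℝ)
    (hv : ∀ t : ℝ, HasDerivAt v (gc c ε dφ t (v t)) t)
    (hvb : Bornology.IsBounded (Set.range v))
    (w : ℝ → ℝ × ℝ)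
    (hw : ∀ t : ℝ, HasDerivAt w
      (dφ (-t) • Dfplus ε (w t) + dφ t • Dfminus (v t) (w t)) t)
    (hwb : Bornology.IsBounded (Set.range w)) :
    ∀ t : ℝ, w t = 0 := by
  -- dφ vanishes on (-∞, 0]
  have hd0 : ∀ s : ℝ, s ≤ 0 → dφ s = 0 := by
    have hlt : ∀ s : ℝ, s < 0 → dφ s = 0 := by
      intro s hs
      have hev : φ =ᶠ[nhds s] fun _ => (0:ℝ) := by
        filter_upwards [Iio_mem_nhds hs] with x hx using hφ0 x hx.le
      have h1 : HasDerivAt φ 0 s :=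
        (hasDerivAt_const s (0:ℝ)).congr_of_eventuallyEq hev
      exact (hφ s).unique h1
    have heq : Set.EqOn dφ (fun _ => (0:ℝ)) (closure (Set.Iio (0:ℝ))) :=
      Set.EqOn.closure (s := Set.Iio 0) (fun s hs => hlt s hs) hdc continuous_const
    intro s hs
    exact heq (by rw [closure_Iio]; exact hs)
  -- dφ equals 1 on [1, ∞)
  have hd1 : ∀ s : ℝ, 1 ≤ s → dφ s = 1 := by
    have hgt : ∀ s : ℝ, 1 < s → dφ s = 1 := by
      intro s hs
      have hev : φ =ᶠ[nhds s] fun x => x := by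
        filter_upwards [Ioi_mem_nhds hs] with x hx using hφ1 x hx.le
      have h1 : HasDerivAt φ 1 s := (hasDerivAt_id s).congr_of_eventuallyEq hev
      exact (hφ s).unique h1
    have heq : Set.EqOn dφ (fun _ => (1:ℝ)) (closure (Set.Ioi (1:ℝ))) :=
      Set.EqOn.closure (s := Set.Ioi 1) (fun s hs => hgt s hs) hdc continuous_const
    intro s hs
    exact heq (by rw [closure_Ioi]; exact hs)
  have hφzero : φ 0 = 0 := hφ0 0 le_rfl
  -- bound on w
  obtain ⟨M, hM⟩ := isBounded_iff_forall_norm_le.1 hwb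
  have hM1 : ∀ t, |(w t).1| ≤ M := fun t => by
    have := hM (w t) (Set.mem_range_self t)
    calc |(w t).1| = ‖(w t).1‖ := (Real.norm_eq_abs _).symm
    _ ≤ ‖w t‖ := norm_fst_le _
    _ ≤ M := this
  -- derivatives of the components of w
  have hw1 : ∀ t : ℝ, HasDerivAt (fun s => (w s).1)
      (dφ (-t) * (-(w t).1 + ε * (w t).2) + dφ t * (w t).1) t := by
    intro t
    have := (hasFDerivAt_fst (𝕜 := ℝ)
      (p := w t)).comp_hasDerivAt t (hw t)
    simpa [Dfplus, Dfminus, Function.comp_def] using this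
  have hw2 : ∀ t : ℝ, HasDerivAt (fun s => (w s).2)
      (dφ (-t) * (w t).2 + dφ t * (6 * (v t).1 * (w t).1 - (w t).2)) t := by
    intro t
    have := (hasFDerivAt_snd (𝕜 := ℝ)
      (p := w t)).comp_hasDerivAt t (hw t)
    simpa [Dfplus, Dfminus, Function.comp_def] using this
  -- derivative of t ↦ φ(-t)
  have hφneg : ∀ t : ℝ, HasDerivAt (fun s => φ (-s)) (-dφ (-t)) t := by
    intro t
    have := (hφ (-t)).comp t (hasDerivAt_neg t)
    simpa [Function.comp_def] using this
  ---- Step A : w₁(t) = w₁(0) e^{φ t} for t ≥ 0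
  have hu : ∀ t : ℝ, HasDerivAt (fun s => (w s).1 * Real.exp (-(φ s)))
      (dφ (-t) * (-(w t).1 + ε * (w t).2) * Real.exp (-(φ t))) t := by
    intro t
    have he : HasDerivAt (fun s => Real.exp (-(φ s)))
        (Real.exp (-(φ t)) * -(dφ t)) t := (hφ t).neg.exp
    have := (hw1 t).mul he
    exact this.congr_deriv (by ring)
  have hA : ∀ t : ℝ, 0 ≤ t → (w t).1 = (w 0).1 * Real.exp (φ t) := by
    intro t ht
    have hc : (w t).1 * Real.exp (-(φ t)) = (w 0).1 * Real.exp (-(φ 0)) := by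
      refine constOn hu ht ?_
      intro x hx _
      have : dφ (-x) = 0 := hd0 (-x) (by linarith)
      rw [this]; ring
    rw [hφzero] at hc
    simp only [neg_zero, Real.exp_zero, mul_one] at hc
    have := congrArg (fun y => y * Real.exp (φ t)) hc
    simpa [mul_assoc, ← Real.exp_add] using this
  -- boundedness forces w₁(0) = 0
  have hw10 : (w 0).1 = 0 := by
    by_contra h
    have habs : 0 < |(w 0).1| := abs_pos.2 h
    set t := max 1 (M / |(w 0).1|) with ht
    have ht1 : (1:ℝ) ≤ t := le_max_left _ _
    have h1 : (w t).1 = (w 0).1 * Real.exp t := by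
      rw [hA t (by linarith), hφ1 t ht1]
    have h2 : |(w t).1| = |(w 0).1| * Real.exp t := by
      rw [h1, abs_mul, abs_of_pos (Real.exp_pos t)]
    have h3 : M / |(w 0).1| < Real.exp t := by
      have := Real.add_one_le_exp t
      have : t < Real.exp t := by linarith
      exact lt_of_le_of_lt (le_max_right _ _) this
    have h4 : M < |(w 0).1| * Real.exp t := by
      have := (div_lt_iff₀ habs).1 h3
      linarith [this]
    have := hM1 t
    rw [h2] at this
    linarith
  have hAz : ∀ t : ℝ, 0 ≤ t → (w t).1 = 0 := by
    intro t ht; rw [hA t ht, hw10, zero_mul]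
  ---- Step B : backward analysis on (-∞, 0]
  -- w₂(t) e^{φ(-t)} is constant on (-∞,0]
  have hp : ∀ t : ℝ, HasDerivAt (fun s => (w s).2 * Real.exp (φ (-s)))
      (dφ t * (6 * (v t).1 * (w t).1 - (w t).2) * Real.exp (φ (-t))) t := by
    intro t
    have he : HasDerivAt (fun s => Real.exp (φ (-s)))
        (Real.exp (φ (-t)) * -dφ (-t)) t := (hφneg t).exp
    have := (hw2 t).mul he
    exact this.congr_deriv (by ring)
  have hB : ∀ t : ℝ, t ≤ 0 → (w t).2 * Real.exp (φ (-t)) = (w 0).2 := by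
    intro t ht
    have hc : (w 0).2 * Real.exp (φ (-0)) = (w t).2 * Real.exp (φ (-t)) := by
      refine constOn hp ht ?_
      intro x _ hx
      have : dφ x = 0 := hd0 x hx
      rw [this]; ring
    simp only [neg_zero, hφzero, Real.exp_zero, mul_one] at hc
    exact hc.symm
  -- the quantity q is constant on (-∞,0]
  have hq : ∀ t : ℝ, HasDerivAt
      (fun s => (w s).1 * Real.exp (-(φ (-s)))
        - ε / 2 * (w 0).2 * Real.exp (-(2 * φ (-s))))
      ((ε * dφ (-t) * (w t).2 + dφ t * (w t).1) * Real.exp (-(φ (-t)))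
        + dφ (-t) * (-(w t).1) * Real.exp (-(φ (-t)))
        + dφ (-t) * (w t).1 * Real.exp (-(φ (-t)))
        - ε * (w 0).2 * dφ (-t) * Real.exp (-(2 * φ (-t)))) t := by
    intro t
    have he1 : HasDerivAt (fun s => Real.exp (-(φ (-s))))
        (Real.exp (-(φ (-t))) * dφ (-t)) t := by
      have := (hφneg t).neg.exp
      simpa using this
    have he2 : HasDerivAt (fun s => Real.exp (-(2 * φ (-s))))
        (Real.exp (-(2 * φ (-t))) * (2 * dφ (-t))) t := by
      have := ((hφneg t).const_mul 2).neg.exp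
      exact this.congr_deriv (by simp only [Pi.neg_apply]; ring)
    have h1 := (hw1 t).mul he1
    have h2 := ((hasDerivAt_const t (ε / 2 * (w 0).2)).mul he2)
    have := h1.sub h2
    exact this.congr_deriv (by ring)
  have hqc : ∀ t : ℝ, t ≤ 0 →
      (w t).1 * Real.exp (-(φ (-t))) - ε / 2 * (w 0).2 * Real.exp (-(2 * φ (-t)))
        = -(ε / 2) * (w 0).2 := by
    intro t ht
    have hc := constOn hq ht (a := t) (b := 0) ?_
    · simp only [neg_zero, hφzero, Real.exp_zero, mul_one, mul_zero] at hc
      rw [← hc, hw10]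
      ring
    · intro x hx hx0
      have hdx : dφ x = 0 := hd0 x hx0
      have hwx : (w x).2 * Real.exp (φ (-x)) = (w 0).2 := hB x hx0
      have hwxe : (w x).2 = (w 0).2 * Real.exp (-(φ (-x))) := by
        rw [← hwx, mul_assoc, ← Real.exp_add]
        simp
      have hwx2 : (w x).2 * Real.exp (-(φ (-x))) = (w 0).2 * Real.exp (-(2 * φ (-x))) := by
        rw [hwxe, mul_assoc, ← Real.exp_add]
        congr 1
        ring
      have : ε * dφ (-x) * (w x).2 * Real.exp (-(φ (-x)))
          = ε * (w 0).2 * dφ (-x) * Real.exp (-(2 * φ (-x))) := by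
        calc ε * dφ (-x) * (w x).2 * Real.exp (-(φ (-x)))
            = ε * dφ (-x) * ((w x).2 * Real.exp (-(φ (-x)))) := by ring
          _ = ε * dφ (-x) * ((w 0).2 * Real.exp (-(2 * φ (-x)))) := by rw [hwx2]
          _ = ε * (w 0).2 * dφ (-x) * Real.exp (-(2 * φ (-x))) := by ring
      rw [hdx]
      ring_nf
      ring_nf at this
      linarith [this]
  -- the constant must be 0: limit as t → -∞
  have hw20 : (w 0).2 = 0 := by
    have hbound : ∀ t : ℝ, t ≤ -1 →
        |(-(ε / 2) * (w 0).2)| ≤ M * Real.exp t + ε / 2 * |(w 0).2| * Real.exp (2 * t) := by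
      intro t ht
      have hφt : φ (-t) = -t := hφ1 (-t) (by linarith)
      have := hqc t (by linarith)
      rw [hφt] at this
      have hexp : -(-t) = t := by ring
      rw [hexp] at this
      rw [← this]
      have h1 : |(w t).1 * Real.exp t| ≤ M * Real.exp t := by
        rw [abs_mul, abs_of_pos (Real.exp_pos t)]
        exact mul_le_mul_of_nonneg_right (hM1 t) (Real.exp_pos t).le
      have h2 : |ε / 2 * (w 0).2 * Real.exp (-(2 * -t))|
          = ε / 2 * |(w 0).2| * Real.exp (2 * t) := by
        rw [abs_mul, abs_mul, abs_of_pos (Real.exp_pos _), abs_of_pos (by linarith : (0:ℝ) < ε / 2)]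
        ring_nf
      calc |(w t).1 * Real.exp t - ε / 2 * (w 0).2 * Real.exp (-(2 * -t))|
          ≤ |(w t).1 * Real.exp t| + |ε / 2 * (w 0).2 * Real.exp (-(2 * -t))| :=
            abs_sub _ _
        _ ≤ M * Real.exp t + ε / 2 * |(w 0).2| * Real.exp (2 * t) := by
            rw [h2]; exact add_le_add h1 le_rfl
    have hlim : Filter.Tendsto
        (fun t => M * Real.exp t + ε / 2 * |(w 0).2| * Real.exp (2 * t))
        Filter.atBot (nhds 0) := by
      have l1 : Filter.Tendsto (fun t : ℝ => M * Real.exp t) Filter.atBot (nhds 0) := by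
        simpa using Real.tendsto_exp_atBot.const_mul M
      have l2 : Filter.Tendsto (fun t : ℝ => ε / 2 * |(w 0).2| * Real.exp (2 * t))
          Filter.atBot (nhds 0) := by
        have : Filter.Tendsto (fun t : ℝ => 2 * t) Filter.atBot Filter.atBot :=
          Filter.tendsto_atBot_atBot.2 fun b => ⟨b / 2, fun a ha => by linarith⟩
        simpa using (Real.tendsto_exp_atBot.comp this).const_mul (ε / 2 * |(w 0).2|)
      simpa using l1.add l2
    have : |(-(ε / 2) * (w 0).2)| ≤ 0 := by
      refine ge_of_tendsto hlim ?_
      filter_upwards [Filter.eventually_le_atBot (-1 : ℝ)] with t ht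
      exact hbound t ht
    have h0 : -(ε / 2) * (w 0).2 = 0 := abs_nonpos_iff.1 this
    have : (w 0).2 = 0 := by
      rcases mul_eq_zero.1 h0 with h | h
      · exfalso; have : ε / 2 ≠ 0 := by positivity
        exact this (by linarith [neg_eq_zero.1 h])
      · exact h
    exact this
  -- now everything is zero on (-∞, 0]
  have hBz : ∀ t : ℝ, t ≤ 0 → (w t).2 = 0 := by
    intro t ht
    have := hB t ht
    rw [hw20] at this
    exact (mul_eq_zero.1 this).resolve_right (Real.exp_ne_zero _)
  have hAzneg : ∀ t : ℝ, t ≤ 0 → (w t).1 = 0 := by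
    intro t ht
    have := hqc t ht
    rw [hw20] at this
    simp only [mul_zero, zero_mul, mul_zero, sub_zero, neg_mul, mul_zero, neg_zero] at this
    exact (mul_eq_zero.1 this).resolve_right (Real.exp_ne_zero _)
  ---- Step C : w₂ = 0 on [0, ∞)
  have hr : ∀ t : ℝ, HasDerivAt (fun s => (w s).2 * Real.exp (φ s))
      ((dφ (-t) * (w t).2 + dφ t * (6 * (v t).1 * (w t).1)) * Real.exp (φ t)) t := by
    intro t
    have he : HasDerivAt (fun s => Real.exp (φ s)) (Real.exp (φ t) * dφ t) t := (hφ t).exp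
    have := (hw2 t).mul he
    exact this.congr_deriv (by ring)
  have hCz : ∀ t : ℝ, 0 ≤ t → (w t).2 = 0 := by
    intro t ht
    have hc : (w t).2 * Real.exp (φ t) = (w 0).2 * Real.exp (φ 0) := by
      refine constOn hr ht ?_
      intro x hx _
      have h1 : dφ (-x) = 0 := hd0 (-x) (by linarith)
      have h2 : (w x).1 = 0 := hAz x hx
      rw [h1, h2]; ring
    rw [hφzero, hw20] at hc
    simp only [Real.exp_zero, zero_mul] at hc
    exact (mul_eq_zero.1 hc).resolve_right (Real.exp_ne_zero _)
  -- conclusion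
  intro t
  rcases le_total t 0 with ht | ht
  · exact Prod.ext (hAzneg t ht) (hBz t ht)
  · exact Prod.ext (hAz t ht) (hCz t ht)
end
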